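/- arXiv:math/0101010 — 4 statements merged into one kernel-verified Lean document; each statement's English description precedes it below -/
import Mathlib

section
/- Let G be a group, φ : G → G an endomorphism, N the normal subgroup of nilpotent elements of φ, and [φ/N] : G/N → G/N the induced endomorphism, [φ/N](xN) = φ(x)N. Then for x, y ∈ G: x and y are φ-conjugate in G if and only if xN and yN are [φ/N]-conjugate in G/N. Consequently the quotient map x ↦ xN induces a bijection from the set of φ-conjugacy classes of G onto the set of [φ/N]-conjugacy classes of G/N, and R(φ) = R([φ/N]). -/
/-- If `ξ^[k] n = 1` then `n = γ * ξ(γ)⁻¹` for some `γ`. -/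
lemma aux_solve {G : Type*} [Group G] (ξ : G →* G) :
    ∀ (k : ℕ) (n : G), ξ^[k] n = 1 → ∃ γ : G, γ * (ξ γ)⁻¹ = n := by
  intro k
  induction k with
  | zero => intro n h; exact ⟨1, by simp [Function.iterate_zero] at h ⊢; simp [h.symm]⟩
  | succ k ih =>
    intro n h
    rw [Function.iterate_succ_apply] at h
    obtain ⟨γ', hγ'⟩ := ih (ξ n) h
    refine ⟨n * γ', ?_⟩
    rw [map_mul, mul_inv_rev, ← mul_assoc, mul_assoc n, hγ']
    group

/-- moving nilpotency through a conjugated endomorphism -/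
lemma aux_conj {G : Type*} [Group G] (φ : G →* G) (z : G) :
    ∀ (k : ℕ) (m : G), φ^[k] m = 1 →
      (((MulAut.conj z).toMonoidHom.comp φ : G →* G))^[k] m = 1 := by
  intro k
  induction k with
  | zero => intro m h; simpa using h
  | succ k ih =>
    intro m h
    rw [Function.iterate_succ_apply] at h ⊢
    have h2 := ih (φ m) h
    show (((MulAut.conj z).toMonoidHom.comp φ : G →* G))^[k] (z * φ m * z⁻¹) = 1
    rw [iterate_map_mul, iterate_map_mul, h2, iterate_map_inv]
    group

/-- Let `N` be the normal subgroup of nilpotent elements of an endomorphism `φ`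
of a group `G`, and let `[φ/N] = ψ` be the induced endomorphism of `G/N`,
`ψ(xN) = φ(x)N`.  Then `x, y ∈ G` are `φ`-conjugate iff `xN` and `yN` are
`ψ`-conjugate in `G/N`; consequently `x ↦ xN` induces a bijection from the set
of `φ`-conjugacy classes of `G` onto the set of `ψ`-conjugacy classes of `G/N`,
and `R(φ) = R([φ/N])`. -/
theorem phi_conjugacy_classes_biject_with_quotient_classes {G : Type*} [Group G]
    (φ : G →* G) (N : Subgroup G) [N.Normal]
    (hN : (N : Set G) = {x : G | ∃ n : ℕ, (⇑φ)^[n] x = 1})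
    (ψ : G ⧸ N →* G ⧸ N) (hψ : ∀ x : G, ψ (x : G ⧸ N) = ((φ x : G) : G ⧸ N)) :
    (∀ x y : G,
        (∃ γ : G, y = γ * x * (φ γ)⁻¹) ↔
          ∃ δ : G ⧸ N, (y : G ⧸ N) = δ * (x : G ⧸ N) * (ψ δ)⁻¹) ∧
      (∃ B : Quot (fun x y : G => ∃ γ : G, y = γ * x * (φ γ)⁻¹) ≃
          Quot (fun x y : G ⧸ N => ∃ δ : G ⧸ N, y = δ * x * (ψ δ)⁻¹),
        ∀ x : G, B (Quot.mk _ x) = Quot.mk _ (x : G ⧸ N)) ∧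
      Cardinal.mk (Quot (fun x y : G => ∃ γ : G, y = γ * x * (φ γ)⁻¹)) =
        Cardinal.mk (Quot (fun x y : G ⧸ N => ∃ δ : G ⧸ N, y = δ * x * (ψ δ)⁻¹)) := by
  set r : G → G → Prop := fun x y => ∃ γ : G, y = γ * x * (φ γ)⁻¹ with hr
  set s : G ⧸ N → G ⧸ N → Prop := fun x y => ∃ δ : G ⧸ N, y = δ * x * (ψ δ)⁻¹ with hs
  -- main equivalence
  have key : ∀ x y : G, r x y ↔ s (x : G ⧸ N) (y : G ⧸ N) := by
    intro x y
    constructor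
    · rintro ⟨γ, rfl⟩
      exact ⟨(γ : G ⧸ N), by rw [hψ]; simp⟩
    · rintro ⟨δ, hδ⟩
      obtain ⟨γ₀, rfl⟩ := QuotientGroup.mk_surjective δ
      rw [hψ] at hδ
      set z : G := γ₀ * x * (φ γ₀)⁻¹ with hz
      have hyz : (y : G ⧸ N) = (z : G ⧸ N) := by
        rw [hδ, hz, QuotientGroup.mk_mul, QuotientGroup.mk_mul, QuotientGroup.mk_inv]
      have hmem : z⁻¹ * y ∈ N := (QuotientGroup.eq).mp hyz.symm
      have hmem' : y * z⁻¹ ∈ N := by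
        have := Subgroup.Normal.conj_mem ‹N.Normal› _ hmem z
        simpa [mul_assoc] using this
      have : y * z⁻¹ ∈ (N : Set G) := hmem'
      rw [hN] at this
      obtain ⟨k, hk⟩ := this
      set n : G := y * z⁻¹ with hn
      set ξ : G →* G := (MulAut.conj z).toMonoidHom.comp φ with hξ
      have hξk : ξ^[k] n = 1 := aux_conj φ z k n hk
      obtain ⟨γ, hγ⟩ := aux_solve ξ k n hξk
      have hξγ : ξ γ = z * φ γ * z⁻¹ := rfl
      refine ⟨γ * γ₀, ?_⟩
      have : γ * (z * φ γ * z⁻¹)⁻¹ = y * z⁻¹ := by rw [← hξγ, hγ]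
      have hy : y = γ * z * (φ γ)⁻¹ := by
        have := congrArg (· * z) this
        simpa [mul_assoc, mul_inv_rev] using this.symm
      rw [hy, hz, map_mul, mul_inv_rev]
      group
  -- s is an equivalence relation
  have sequiv : Equivalence s := by
    constructor
    · intro x; exact ⟨1, by simp⟩
    · rintro x y ⟨δ, rfl⟩
      exact ⟨δ⁻¹, by rw [map_inv]; group⟩
    · rintro x y z ⟨δ, rfl⟩ ⟨ε, rfl⟩
      exact ⟨ε * δ, by rw [map_mul]; group⟩
  -- the forward map on quotients
  have hcomp : ∀ x y : G, r x y →
      Quot.mk s (x : G ⧸ N) = Quot.mk s (y : G ⧸ N) := by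
    intro x y hxy
    exact Quot.sound ((key x y).mp hxy)
  set F : Quot r → Quot s := Quot.lift (fun x : G => Quot.mk s (x : G ⧸ N)) hcomp with hF
  have hFmk : ∀ x : G, F (Quot.mk r x) = Quot.mk s (x : G ⧸ N) := fun _ => rfl
  have hFbij : Function.Bijective F := by
    constructor
    · intro a b
      obtain ⟨x, rfl⟩ := Quot.exists_rep a
      obtain ⟨y, rfl⟩ := Quot.exists_rep b
      intro h
      rw [hFmk, hFmk] at h
      have := Quot.eq.mp h
      have hsxy : s (x : G ⧸ N) (y : G ⧸ N) := by
        rwa [Equivalence.eqvGen_iff sequiv] at this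
      exact Quot.sound ((key x y).mpr hsxy)
    · intro b
      obtain ⟨q, rfl⟩ := Quot.exists_rep b
      obtain ⟨x, rfl⟩ := QuotientGroup.mk_surjective q
      exact ⟨Quot.mk r x, rfl⟩
  refine ⟨key, ⟨Equiv.ofBijective F hFbij, fun x => rfl⟩, ?_⟩
  exact Cardinal.mk_congr (Equiv.ofBijective F hFbij)
end

section
/- Let G be a group, α an automorphism of G, and for h ∈ G let i_h denote the inner automorphism i_h(g) = h·g·h⁻¹. For m, n ∈ G, the automorphisms β = i_m ∘ α and γ = i_n ∘ α are isogredient (i.e., there exists g ∈ G with γ = i_g ∘ β ∘ i_g⁻¹) if and only if there exist g ∈ G and an element c of the center Z(G) of G such that n = g · m · α(g)⁻¹ · c. -/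
private lemma aux_key {G : Type*} [Group G] (α : MulAut G) (k n : G) :
    MulAut.conj n * α = MulAut.conj k * α ↔ k⁻¹ * n ∈ Subgroup.center G := by
  rw [mul_right_cancel_iff, Subgroup.mem_center_iff]
  constructor
  · intro h x
    have hx := DFunLike.congr_fun h x
    simp only [MulAut.conj_apply] at hx
    calc x * (k⁻¹ * n) = k⁻¹ * (k * x * k⁻¹) * n := by group
      _ = k⁻¹ * (n * x * n⁻¹) * n := by rw [hx]
      _ = k⁻¹ * n * x := by group
  · intro h
    ext x
    simp only [MulAut.conj_apply]
    calc n * x * n⁻¹ = k * (k⁻¹ * n * x) * n⁻¹ := by group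
      _ = k * (x * (k⁻¹ * n)) * n⁻¹ := by rw [h x]
      _ = k * x * k⁻¹ := by group

private lemma aux_conj_s11 {G : Type*} [Group G] (α : MulAut G) (g m : G) :
    MulAut.conj g * (MulAut.conj m * α) * (MulAut.conj g)⁻¹
      = MulAut.conj (g * m * (α g)⁻¹) * α := by
  ext x
  simp only [MulAut.mul_apply, MulAut.conj_apply, MulAut.conj_inv_apply, map_mul, map_inv]

/-- For `m, n ∈ G` and an automorphism `α` of `G`, the automorphisms
`β = i_m ∘ α` and `γ = i_n ∘ α` (where `i_h` is the inner automorphism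
`g ↦ h * g * h⁻¹`) are isogredient — i.e. `γ = i_g ∘ β ∘ i_g⁻¹` for some `g` —
iff there exist `g ∈ G` and a central element `c` with `n = g * m * (α g)⁻¹ * c`. -/
theorem isogredient_iff_twisted_conjugate_mod_center {G : Type*} [Group G]
    (α : MulAut G) (m n : G) :
    (∃ g : G,
        MulAut.conj n * α = MulAut.conj g * (MulAut.conj m * α) * (MulAut.conj g)⁻¹) ↔
      ∃ g c : G, c ∈ Subgroup.center G ∧ n = g * m * (α g)⁻¹ * c := by
  constructor
  · rintro ⟨g, h⟩
    rw [aux_conj_s11, aux_key] at h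
    exact ⟨g, _, h, by group⟩
  · rintro ⟨g, c, hc, rfl⟩
    refine ⟨g, ?_⟩
    rw [aux_conj_s11, aux_key]
    have h2 : (g * m * (α g)⁻¹)⁻¹ * (g * m * (α g)⁻¹ * c) = c := by group
    rwa [h2]
end

section
/- Let G be a group and α an automorphism of G. Since the center Z(G) is a characteristic subgroup, α induces an automorphism ᾱ of G/Z(G). Then the map sending the automorphism i_n ∘ α (for n ∈ G) to the ᾱ-conjugacy class of the coset n·Z(G) induces a well-defined bijection between the set of isogredience classes of automorphisms of the form i_n ∘ α, n ∈ G, and the set of ᾱ-twisted conjugacy classes of the group G/Z(G). -/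
namespace IsogAux

variable {G : Type*} [Group G]

lemma conj_eq_iff {k k' : G} :
    MulAut.conj k = MulAut.conj k' ↔
      (k : G ⧸ Subgroup.center G) = (k' : G ⧸ Subgroup.center G) := by
  rw [QuotientGroup.eq, Subgroup.mem_center_iff]
  constructor
  · intro h g
    have h1 : k * g * k⁻¹ = k' * g * k'⁻¹ := by
      have := congrArg (fun f : MulAut G => f g) h
      simpa using this
    calc g * (k⁻¹ * k') = k⁻¹ * (k * g * k⁻¹) * k' := by group
      _ = k⁻¹ * (k' * g * k'⁻¹) * k' := by rw [h1]
      _ = (k⁻¹ * k') * g := by group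
  · intro h
    ext g
    show k * g * k⁻¹ = k' * g * k'⁻¹
    calc k * g * k⁻¹ = k * (g * (k⁻¹ * k')) * k'⁻¹ := by group
      _ = k * ((k⁻¹ * k') * g) * k'⁻¹ := by rw [h g]
      _ = k' * g * k'⁻¹ := by group

lemma conj_shift (α : MulAut G) (h k : G) :
    MulAut.conj h * (MulAut.conj k * α) * (MulAut.conj h)⁻¹ =
      MulAut.conj (h * k * (α h)⁻¹) * α := by
  ext g
  show h * (k * (α ((MulAut.conj h)⁻¹ g)) * k⁻¹) * h⁻¹ = _
  have : (MulAut.conj h)⁻¹ g = h⁻¹ * g * h := by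
    rw [← map_inv]
    simp
  rw [this]
  show _ = (h * k * (α h)⁻¹) * α g * (h * k * (α h)⁻¹)⁻¹
  simp only [map_mul, map_inv]
  group

section Main

variable (α : MulAut G) (αbar : (G ⧸ Subgroup.center G) ≃* (G ⧸ Subgroup.center G))

abbrev S := {β : MulAut G // ∃ k : G, β = MulAut.conj k * α}

def SRel : S α → S α → Prop :=
  fun β γ => ∃ h : G, (γ : MulAut G) = MulAut.conj h * (β : MulAut G) * (MulAut.conj h)⁻¹

def TRel : (G ⧸ Subgroup.center G) → (G ⧸ Subgroup.center G) → Prop :=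
  fun x y => ∃ γ, y = γ * x * (αbar γ)⁻¹

lemma pick_coe_eq (β : S α) {k : G} (hk : (β : MulAut G) = MulAut.conj k * α) :
    ((β.2.choose : G) : G ⧸ Subgroup.center G) = (k : G ⧸ Subgroup.center G) :=
  conj_eq_iff.mp (mul_right_cancel (β.2.choose_spec.symm.trans hk))

variable (hαbar : ∀ x : G, αbar (x : G ⧸ Subgroup.center G) = ((α x : G) : G ⧸ Subgroup.center G))

noncomputable def toMap : Quot (SRel α) → Quot (TRel αbar) :=
  Quot.lift (fun β => Quot.mk _ ((β.2.choose : G) : G ⧸ Subgroup.center G)) (by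
    rintro a b ⟨h, hb⟩
    apply Quot.sound
    refine ⟨(h : G ⧸ Subgroup.center G), ?_⟩
    have key : ∀ c : G, (a : MulAut G) = MulAut.conj c * α →
        (b : MulAut G) = MulAut.conj (h * c * (α h)⁻¹) * α := by
      intro c hc
      rw [hb, hc, conj_shift]
    have hb' := key _ a.2.choose_spec
    rw [pick_coe_eq α b hb', hαbar]
    rfl)

noncomputable def invMap : Quot (TRel αbar) → Quot (SRel α) :=
  Quot.lift
    (fun x => Quotient.liftOn' x (fun k => Quot.mk (SRel α) ⟨MulAut.conj k * α, k, rfl⟩)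
      (by
        intro a b hab
        have hcoset : (a : G ⧸ Subgroup.center G) = (b : G ⧸ Subgroup.center G) :=
          Quotient.sound' hab
        refine congrArg (Quot.mk (SRel α)) (Subtype.ext ?_)
        show MulAut.conj a * α = MulAut.conj b * α
        rw [conj_eq_iff.mpr hcoset]))
    (by
      rintro x y ⟨γ, rfl⟩
      obtain ⟨h, rfl⟩ := QuotientGroup.mk_surjective γ
      obtain ⟨k, rfl⟩ := QuotientGroup.mk_surjective x
      have e : ((h : G ⧸ Subgroup.center G) * k * (αbar h)⁻¹) =
          ((h * k * (α h)⁻¹ : G) : G ⧸ Subgroup.center G) := by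
        rw [hαbar]; rfl
      rw [e]
      show Quot.mk (SRel α) ⟨MulAut.conj k * α, k, rfl⟩ =
        Quot.mk (SRel α) ⟨MulAut.conj (h * k * (α h)⁻¹) * α, h * k * (α h)⁻¹, rfl⟩
      exact Quot.sound ⟨h, (conj_shift α h k).symm⟩)

end Main

end IsogAux

/-- Let `α` be an automorphism of `G` and `ᾱ` the automorphism it induces on
`G/Z(G)` (so `ᾱ(x Z(G)) = α(x) Z(G)`).  Sending `i_n ∘ α` to the `ᾱ`-twisted
conjugacy class of `n Z(G)` induces a well-defined bijection from the set of
isogredience classes of automorphisms of the form `i_n ∘ α`, `n ∈ G`, onto the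
set of `ᾱ`-twisted conjugacy classes of `G/Z(G)`. -/
theorem isogredience_classes_equiv_twisted_classes_mod_center {G : Type*} [Group G]
    (α : MulAut G)
    (αbar : (G ⧸ Subgroup.center G) ≃* (G ⧸ Subgroup.center G))
    (hαbar : ∀ x : G, αbar (x : G ⧸ Subgroup.center G) = ((α x : G) : G ⧸ Subgroup.center G)) :
    ∃ B : Quot (fun β γ : {β : MulAut G // ∃ k : G, β = MulAut.conj k * α} =>
            ∃ h : G, (γ : MulAut G) = MulAut.conj h * (β : MulAut G) * (MulAut.conj h)⁻¹) ≃
          Quot (fun x y : G ⧸ Subgroup.center G => ∃ γ, y = γ * x * (αbar γ)⁻¹),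
      ∀ k : G,
        B (Quot.mk _ ⟨MulAut.conj k * α, k, rfl⟩) =
          Quot.mk _ ((k : G ⧸ Subgroup.center G)) := by
  refine ⟨⟨IsogAux.toMap α αbar hαbar, IsogAux.invMap α αbar hαbar, ?_, ?_⟩, ?_⟩
  · intro q
    induction q using Quot.ind with
    | mk a =>
      show Quot.mk _ ⟨MulAut.conj a.2.choose * α, a.2.choose, rfl⟩ = Quot.mk _ a
      exact congrArg _ (Subtype.ext a.2.choose_spec.symm)
  · intro q
    induction q using Quot.ind with
    | mk x =>
      obtain ⟨k, rfl⟩ := QuotientGroup.mk_surjective x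
      exact congrArg (Quot.mk _) (IsogAux.pick_coe_eq α ⟨MulAut.conj k * α, k, rfl⟩ rfl)
  · intro k
    exact congrArg (Quot.mk _) (IsogAux.pick_coe_eq α ⟨MulAut.conj k * α, k, rfl⟩ rfl)
end

section
/- Let G be a group containing elements a, b that freely generate a free subgroup of rank 2 (i.e., the homomorphism from the free group on two generators sending the generators to a and b is injective). Let u ∈ G and let p, q be nonzero integers such that u·aᵖ·u⁻¹ = a⁻ᵖ and u·b^q·u⁻¹ = b^{-q}. Then for c = aᵖ·b^q one has u·c·u⁻¹ ≠ c⁻¹. -/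
open ModularGroup Matrix

noncomputable def Lmat : Matrix.SpecialLinearGroup (Fin 2) ℤ := S * T⁻¹ * S⁻¹

lemma coe_L_zpow (n : ℤ) : (((Lmat ^ n : Matrix.SpecialLinearGroup (Fin 2) ℤ)) : Matrix (Fin 2) (Fin 2) ℤ) = !![1, 0; n, 1] := by
  have h : Lmat ^ n = S * T ^ (-n) * S⁻¹ := by
    unfold Lmat
    rw [conj_zpow, _root_.inv_zpow, ← _root_.zpow_neg]
  rw [h]
  simp only [Matrix.SpecialLinearGroup.coe_mul, coe_T_zpow, coe_S]
  rw [show ((S⁻¹ : Matrix.SpecialLinearGroup (Fin 2) ℤ) : Matrix (Fin 2) (Fin 2) ℤ)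
      = !![0, 1; -1, 0] by
    rw [SpecialLinearGroup.SL2_inv_expl]; simp [coe_S]; rfl]
  rw [Matrix.mul_fin_two, Matrix.mul_fin_two]
  norm_num

lemma key (p q : ℤ) (hp : p ≠ 0) (hq : q ≠ 0) :
    (FreeGroup.of true : FreeGroup Bool) ^ p * FreeGroup.of false ^ q ≠
      FreeGroup.of false ^ q * FreeGroup.of true ^ p := by
  intro h
  have := congrArg (fun x => ((FreeGroup.lift (fun i : Bool => if i then T else Lmat) x
      : Matrix.SpecialLinearGroup (Fin 2) ℤ) : Matrix (Fin 2) (Fin 2) ℤ) 0 0) h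
  simp only [_root_.map_mul, _root_.map_zpow, FreeGroup.lift_apply_of, if_true, if_false,
    Bool.false_eq_true, ite_true, ite_false,
    Matrix.SpecialLinearGroup.coe_mul, coe_T_zpow, coe_L_zpow] at this
  rw [Matrix.mul_fin_two, Matrix.mul_fin_two] at this
  simp at this
  rcases this with h | h; exacts [hp h, hq h]

/-- Let `a, b ∈ G` freely generate a free subgroup of rank `2`, let `u ∈ G`,
and let `p, q` be nonzero integers with `u * a^p * u⁻¹ = a^(-p)` and
`u * b^q * u⁻¹ = b^(-q)`.  Then for `c = a^p * b^q` one has `u * c * u⁻¹ ≠ c⁻¹`. -/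
theorem conj_ne_inv_of_free_pair {G : Type*} [Group G] (a b u : G)
    (hfree : Function.Injective ⇑(FreeGroup.lift (fun i : Bool => if i then a else b)))
    (p q : ℤ) (hp : p ≠ 0) (hq : q ≠ 0)
    (ha : u * a ^ p * u⁻¹ = a ^ (-p)) (hb : u * b ^ q * u⁻¹ = b ^ (-q)) :
    u * (a ^ p * b ^ q) * u⁻¹ ≠ (a ^ p * b ^ q)⁻¹ := by
  intro h
  have h1 : a ^ (-p) * b ^ (-q) = b ^ (-q) * a ^ (-p) := by
    have h0 : (u * a ^ p * u⁻¹) * (u * b ^ q * u⁻¹) = (a ^ p * b ^ q)⁻¹ := by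
      rw [← h]; group
    rw [ha, hb, _root_.mul_inv_rev, ← _root_.zpow_neg, ← _root_.zpow_neg] at h0
    exact h0
  have h2 : (FreeGroup.of true : FreeGroup Bool) ^ (-p) * FreeGroup.of false ^ (-q) =
      FreeGroup.of false ^ (-q) * FreeGroup.of true ^ (-p) := by
    apply hfree
    simpa [_root_.map_mul, _root_.map_zpow, FreeGroup.lift_apply_of] using h1
  exact key (-p) (-q) (neg_ne_zero.mpr hp) (neg_ne_zero.mpr hq) h2
end
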